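/- Convexity of the user's energy-neutrality constraint set: let K be a positive integer, let B > 0, c ≥ 0, E ∈ ℝ, and let a₁, …, a_K > 0. Then the set of tuples (ℓ₀, ℓ₁, …, ℓ_K, t₁, …, t_K) ∈ ℝ^{2K+1} with ℓ_k ≥ 0 for all k, t_k > 0 for all k, and ∑_{k=1}^{K} a_k · t_k · (2^{ℓ_k/(t_k B)} − 1) + c·ℓ₀³ ≤ E is a convex subset of ℝ^{2K+1}. -/

import Mathlib

open Real Set Finset

lemma two_rpow_convex : ConvexOn ℝ Set.univ (fun x : ℝ => (2:ℝ) ^ x) := by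
  have h : (fun x : ℝ => (2:ℝ) ^ x) = fun x => Real.exp (Real.log 2 * x) := by
    funext x; rw [Real.rpow_def_of_pos (by norm_num)]
  rw [h]
  refine ⟨convex_univ, ?_⟩
  intro x _ y _ α β hα hβ hab
  have := convexOn_exp.2 (Set.mem_univ (Real.log 2 * x)) (Set.mem_univ (Real.log 2 * y)) hα hβ hab
  simp only [smul_eq_mul] at this
  have e : Real.log 2 * (α * x + β * y) = α * (Real.log 2 * x) + β * (Real.log 2 * y) := by ring
  simp only [smul_eq_mul]
  rw [e]; exact this

lemma persp_ineq (B : ℝ) (hB : 0 < B) {x1 x2 t1 t2 α β : ℝ}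
    (ht1 : 0 < t1) (ht2 : 0 < t2) (hα : 0 ≤ α) (hβ : 0 ≤ β) (hab : α + β = 1) :
    (α*t1+β*t2) * ((2:ℝ)^((α*x1+β*x2)/((α*t1+β*t2)*B)) - 1) ≤
      α*(t1*((2:ℝ)^(x1/(t1*B))-1)) + β*(t2*((2:ℝ)^(x2/(t2*B))-1)) := by
  rcases eq_or_lt_of_le hα with hα0 | hαpos
  · have hβ1 : β = 1 := by linarith
    simp [← hα0, hβ1]
  rcases eq_or_lt_of_le hβ with hβ0 | hβpos
  · have hα1 : α = 1 := by linarith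
    simp [← hβ0, hα1]
  set T := α*t1 + β*t2 with hT
  have hTpos : 0 < T := by positivity
  set lam := α*t1/T with hlam
  set mu := β*t2/T with hmu
  have hlpos : 0 < lam := by positivity
  have hmpos : 0 < mu := by positivity
  have hlm : lam + mu = 1 := by
    rw [hlam, hmu, ← add_div, ← hT, div_self hTpos.ne']
  have hkey : (α*x1+β*x2)/(T*B) = lam * (x1/(t1*B)) + mu * (x2/(t2*B)) := by
    rw [hlam, hmu]; field_simp [hTpos.ne']
  have hconv := two_rpow_convex.2 (Set.mem_univ (x1/(t1*B))) (Set.mem_univ (x2/(t2*B)))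
    hlpos.le hmpos.le hlm
  simp only [smul_eq_mul] at hconv
  rw [hkey]
  have h2 : T * ((2:ℝ)^(lam * (x1/(t1*B)) + mu * (x2/(t2*B))) - 1)
      ≤ T * (lam * (2:ℝ)^(x1/(t1*B)) + mu * (2:ℝ)^(x2/(t2*B)) - 1) := by
    apply mul_le_mul_of_nonneg_left _ hTpos.le
    linarith
  refine h2.trans_eq ?_
  have e1 : T * lam = α * t1 := by rw [hlam]; field_simp [hTpos.ne']
  have e2 : T * mu = β * t2 := by rw [hmu]; field_simp [hTpos.ne']
  have : T * (lam * (2:ℝ)^(x1/(t1*B)) + mu * (2:ℝ)^(x2/(t2*B)) - 1)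
      = (T*lam) * (2:ℝ)^(x1/(t1*B)) + (T*mu) * (2:ℝ)^(x2/(t2*B)) - T := by ring
  rw [this, e1, e2, hT]
  ring

theorem energy_neutrality_constraint_convex
    (K : ℕ) (hK : 0 < K) (B : ℝ) (hB : 0 < B) (c : ℝ) (hc : 0 ≤ c) (E : ℝ)
    (a : Fin K → ℝ) (ha : ∀ k, 0 < a k) :
    Convex ℝ {p : ℝ × (Fin K → ℝ) × (Fin K → ℝ) |
      0 ≤ p.1 ∧ (∀ k, 0 ≤ p.2.1 k) ∧ (∀ k, 0 < p.2.2 k) ∧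
      ∑ k, a k * p.2.2 k * ((2 : ℝ) ^ (p.2.1 k / (p.2.2 k * B)) - 1) +
        c * p.1 ^ 3 ≤ E} := by
  rintro ⟨x0, xl, xt⟩ ⟨hx0, hxl, hxt, hxE⟩ ⟨y0, yl, yt⟩ ⟨hy0, hyl, hyt, hyE⟩ α β hα hβ hab
  simp only [Set.mem_setOf_eq, Prod.smul_mk, Prod.mk_add_mk, smul_eq_mul, Pi.add_apply,
    Pi.smul_apply] at *
  refine ⟨by positivity, fun k => by have := hxl k; have := hyl k; positivity,
    fun k => ?_, ?_⟩
  · have h1 := hxt k; have h2 := hyt k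
    rcases eq_or_lt_of_le hα with h | h
    · have : β = 1 := by linarith
      simp [← h, this]; linarith
    · have : 0 < α * xt k := by positivity
      have : 0 ≤ β * yt k := by positivity
      linarith
  · have hcube : c * (α * x0 + β * y0)^3 ≤ α * (c * x0^3) + β * (c * y0^3) := by
      have := (convexOn_pow 3).2 (Set.mem_Ici.mpr hx0) (Set.mem_Ici.mpr hy0) hα hβ hab
      simp only [smul_eq_mul] at this
      calc c * (α * x0 + β * y0)^3 ≤ c * (α * x0^3 + β * y0^3) :=
            mul_le_mul_of_nonneg_left this hc
        _ = α * (c * x0^3) + β * (c * y0^3) := by ring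
    have hsum : ∑ k, a k * (α * xt k + β * yt k) *
        ((2:ℝ)^((α * xl k + β * yl k)/((α * xt k + β * yt k)*B)) - 1)
        ≤ α * (∑ k, a k * xt k * ((2:ℝ)^(xl k/(xt k*B)) - 1))
          + β * (∑ k, a k * yt k * ((2:ℝ)^(yl k/(yt k*B)) - 1)) := by
      rw [Finset.mul_sum, Finset.mul_sum, ← Finset.sum_add_distrib]
      apply Finset.sum_le_sum
      intro k _
      have h := persp_ineq B hB (hxt k) (hyt k) hα hβ hab
        (x1 := xl k) (x2 := yl k) (t1 := xt k) (t2 := yt k)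
      have ha' := (ha k).le
      calc a k * (α * xt k + β * yt k) *
            ((2:ℝ)^((α * xl k + β * yl k)/((α * xt k + β * yt k)*B)) - 1)
          = a k * ((α * xt k + β * yt k) *
            ((2:ℝ)^((α * xl k + β * yl k)/((α * xt k + β * yt k)*B)) - 1)) := by ring
        _ ≤ a k * (α*(xt k*((2:ℝ)^(xl k/(xt k*B))-1)) + β*(yt k*((2:ℝ)^(yl k/(yt k*B))-1))) :=
            mul_le_mul_of_nonneg_left h ha'
        _ = α * (a k * xt k * ((2:ℝ)^(xl k/(xt k*B)) - 1))
            + β * (a k * yt k * ((2:ℝ)^(yl k/(yt k*B)) - 1)) := by ring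
    have := add_le_add hsum hcube
    calc ∑ k, a k * (α * xt k + β * yt k) *
          ((2:ℝ)^((α * xl k + β * yl k)/((α * xt k + β * yt k)*B)) - 1)
          + c * (α * x0 + β * y0)^3
        ≤ α * (∑ k, a k * xt k * ((2:ℝ)^(xl k/(xt k*B)) - 1) + c * x0^3)
          + β * (∑ k, a k * yt k * ((2:ℝ)^(yl k/(yt k*B)) - 1) + c * y0^3) := by linarith
      _ ≤ α * E + β * E := by
          apply add_le_add (mul_le_mul_of_nonneg_left hxE hα) (mul_le_mul_of_nonneg_left hyE hβ)
      _ = E := by rw [← add_mul, hab, one_mul]
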